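/- For all integers 2 ≤ s ≤ m, the minimum size of a label set for M(s,m) satisfies the upper bound L_min(s,m) ≤ 2^{s+1} · ((s−1)(1 + ⌈log₂ m⌉) − 1). -/

import Mathlib

/-- The recursively constructed mask set `M(s, m)`, viewed as a set of vectors of
length `2^m` indexed by the points of `𝔽₂^m` (i.e. functions `(Fin m → ZMod 2) → ZMod 2`).
For a point `p : Fin (m+1) → ZMod 2`, the coordinate `p 0` selects the half
(left half for `p 0 = 0`) and `Fin.tail p` the position inside that half, so that
the concatenation `[x, y]` corresponds to
`fun p => if p 0 = 0 then x (Fin.tail p) else y (Fin.tail p)`. -/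
def maskSet : (m : ℕ) → ℕ → Set ((Fin m → ZMod 2) → ZMod 2)
  | 0, _ => Set.univ
  | m + 1, s =>
    if s ≤ 1 then {fun _ => 0, fun _ => 1}
    else if m + 1 ≤ Nat.clog 2 s then Set.univ
    else
      ((fun g : (Fin m → ZMod 2) → ZMod 2 => fun p => g (Fin.tail p)) '' maskSet m s) ∪
        ⋃ i ∈ Finset.Ico 1 s,
          {f | ∃ x ∈ maskSet m i, ∃ y ∈ maskSet m (s - i),
            f = fun p => if p 0 = 0 then x (Fin.tail p) else y (Fin.tail p)}

/-- A finite set `L` of coordinate positions is a label set for (distinguishes) `S`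
if distinct vectors of `S` have distinct restrictions to `L`. -/
def Distinguishes {ι : Type*} (L : Finset ι) (S : Set (ι → ZMod 2)) : Prop :=
  ∀ x ∈ S, ∀ y ∈ S, (∀ i ∈ L, x i = y i) → x = y

/-- `L_min(s, m)`: the minimum cardinality of a label set for `M(s, m)`. -/
noncomputable def Lmin (s m : ℕ) : ℕ :=
  sInf {k | ∃ L : Finset (Fin m → ZMod 2), L.card = k ∧ Distinguishes L (maskSet m s)}

-- aux defs
def dupF {m : ℕ} (g : (Fin m → ZMod 2) → ZMod 2) : (Fin (m+1) → ZMod 2) → ZMod 2 :=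
  fun p => g (Fin.tail p)

def glueF {m : ℕ} (x y : (Fin m → ZMod 2) → ZMod 2) : (Fin (m+1) → ZMod 2) → ZMod 2 :=
  fun p => if p 0 = 0 then x (Fin.tail p) else y (Fin.tail p)

def Dcard {m : ℕ} (f g : (Fin m → ZMod 2) → ZMod 2) : ℕ :=
  (Finset.univ.filter fun p => f p ≠ g p).card

lemma maskSet_succ (m s : ℕ) : maskSet (m+1) s =
    if s ≤ 1 then {fun _ => 0, fun _ => 1}
    else if m + 1 ≤ Nat.clog 2 s then Set.univ
    else
      ((fun g : (Fin m → ZMod 2) → ZMod 2 => fun p => g (Fin.tail p)) '' maskSet m s) ∪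
        ⋃ i ∈ Finset.Ico 1 s,
          {f | ∃ x ∈ maskSet m i, ∃ y ∈ maskSet m (s - i),
            f = fun p => if p 0 = 0 then x (Fin.tail p) else y (Fin.tail p)} := rfl

lemma maskSet_zero (s : ℕ) : maskSet 0 s = Set.univ := rfl

lemma const_mem : ∀ (m s : ℕ), 1 ≤ s → ∀ c : ZMod 2, (fun _ => c) ∈ maskSet m s := by
  intro m
  induction m with
  | zero => intro s hs c; rw [maskSet_zero]; trivial
  | succ m IH =>
    intro s hs c
    rw [maskSet_succ]
    by_cases h1 : s ≤ 1
    · rw [if_pos h1]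
      have hc : c = 0 ∨ c = 1 := by revert c; decide
      rcases hc with rfl | rfl
      · exact Set.mem_insert _ _
      · exact Set.mem_insert_of_mem _ rfl
    · rw [if_neg h1]
      by_cases h2 : m + 1 ≤ Nat.clog 2 s
      · rw [if_pos h2]; trivial
      · rw [if_neg h2]
        exact Set.mem_union_left _ ⟨fun _ => c, IH s hs c, rfl⟩

lemma mask_inv {m s : ℕ} (hs : 1 ≤ s) (hm : Nat.clog 2 s ≤ m)
    {f : (Fin (m+1) → ZMod 2) → ZMod 2} (hf : f ∈ maskSet (m+1) s) :
    (∃ s' f', 1 ≤ s' ∧ s' ≤ s ∧ f' ∈ maskSet m s' ∧ f = dupF f') ∨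
    (∃ i x y, 1 ≤ i ∧ i < s ∧ x ∈ maskSet m i ∧ y ∈ maskSet m (s - i) ∧ f = glueF x y) := by
  rw [maskSet_succ] at hf
  by_cases h1 : s ≤ 1
  · rw [if_pos h1] at hf
    rcases hf with rfl | hf
    · exact Or.inl ⟨1, fun _ => 0, le_refl _, hs, const_mem m 1 le_rfl 0, rfl⟩
    · rcases hf with rfl
      exact Or.inl ⟨1, fun _ => 1, le_refl _, hs, const_mem m 1 le_rfl 1, rfl⟩
  · rw [if_neg h1, if_neg (by omega)] at hf
    rcases hf with ⟨f', hf', heq⟩ | hf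
    · exact Or.inl ⟨s, f', hs, le_rfl, hf', heq.symm⟩
    · rw [Set.mem_iUnion₂] at hf
      obtain ⟨i, hi, x, hx, y, hy, heq⟩ := hf
      rw [Finset.mem_Ico] at hi
      exact Or.inr ⟨i, x, y, hi.1, hi.2, hx, hy, heq⟩

lemma Dcard_comm {m : ℕ} (f g : (Fin m → ZMod 2) → ZMod 2) : Dcard f g = Dcard g f := by
  unfold Dcard
  congr 1
  ext p
  simp [ne_comm]

lemma Dcard_pos {m : ℕ} {f g : (Fin m → ZMod 2) → ZMod 2} (h : f ≠ g) : 1 ≤ Dcard f g := by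
  obtain ⟨p, hp⟩ := Function.ne_iff.mp h
  exact Finset.card_pos.mpr ⟨p, by simp [hp]⟩

lemma Dcard_split {m : ℕ} (f g : (Fin (m+1) → ZMod 2) → ZMod 2) :
    Dcard f g = Dcard (fun p => f (Fin.cons 0 p)) (fun p => g (Fin.cons 0 p))
              + Dcard (fun p => f (Fin.cons 1 p)) (fun p => g (Fin.cons 1 p)) := by
  have key : ∀ ε : ZMod 2,
      ((Finset.univ.filter fun p : Fin (m+1) → ZMod 2 => f p ≠ g p ∧ p 0 = ε)).card
        = Dcard (fun p => f (Fin.cons ε p)) (fun p => g (Fin.cons ε p)) := by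
    intro ε
    refine Finset.card_nbij' (fun p => Fin.tail p) (fun q => Fin.cons ε q) ?_ ?_ ?_ ?_
    · intro p hp
      simp only [Finset.mem_coe, Finset.mem_filter, Finset.mem_univ, true_and] at hp ⊢
      rw [← hp.2, Fin.cons_self_tail]
      exact hp.1
    · intro q hq
      simp only [Finset.mem_coe, Finset.mem_filter, Finset.mem_univ, true_and] at hq ⊢
      exact ⟨hq, Fin.cons_zero _ _⟩
    · intro p hp
      simp only [Finset.mem_coe, Finset.mem_filter, Finset.mem_univ, true_and] at hp
      show Fin.cons ε (Fin.tail p) = p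
      rw [← hp.2]
      exact Fin.cons_self_tail p
    · intro q _
      exact Fin.tail_cons _ _
  have hzo : ∀ v : ZMod 2, ¬(v = 0) ↔ v = 1 := by decide
  have h0 := Finset.card_filter_add_card_filter_not
    (s := Finset.univ.filter fun p : Fin (m+1) → ZMod 2 => f p ≠ g p)
    (p := fun p => p 0 = 0)
  have e1 : ((Finset.univ.filter fun p : Fin (m+1) → ZMod 2 => f p ≠ g p).filter
      (fun p => p 0 = 0)) = Finset.univ.filter fun p : Fin (m+1) → ZMod 2 => f p ≠ g p ∧ p 0 = 0 :=
    Finset.filter_filter _ _ _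
  have e2 : ((Finset.univ.filter fun p : Fin (m+1) → ZMod 2 => f p ≠ g p).filter
      (fun p => ¬ p 0 = 0)) = Finset.univ.filter fun p : Fin (m+1) → ZMod 2 => f p ≠ g p ∧ p 0 = 1 := by
    rw [Finset.filter_filter]
    exact Finset.filter_congr (fun p _ => by rw [hzo])
  rw [e1, e2] at h0
  unfold Dcard
  rw [← h0, key 0, key 1]
  rfl

lemma binom_aux : ∀ (k x y : ℕ), x^(k+1) + (k+1)*y*x^k ≤ (x+y)^(k+1) := by
  intro k
  induction k with
  | zero => intro x y; simp
  | succ k IH =>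
    intro x y
    have h1 : (x^(k+1) + (k+1)*y*x^k) * (x+y) ≤ (x+y)^(k+1) * (x+y) :=
      Nat.mul_le_mul_right _ (IH x y)
    calc x^(k+2) + (k+2)*y*x^(k+1)
        ≤ x^(k+2) + (k+2)*y*x^(k+1) + ((k+1)*y*y*x^k) := Nat.le_add_right _ _
      _ = (x^(k+1) + (k+1)*y*x^k) * (x+y) := by ring
      _ ≤ (x+y)^(k+1) * (x+y) := h1
      _ = (x+y)^(k+2) := by ring

lemma q_pow_ge {q : ℕ} (hq : 2 ≤ q) : 2*(q-1)^q ≤ q^q := by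
  obtain ⟨k, rfl⟩ : ∃ k, q = k+2 := ⟨q-2, by omega⟩
  have h := binom_aux (k+1) (k+1) 1
  have h2 : (k+1+1) = k+2 := by ring
  simp only [mul_one] at h
  have e : (k+2) - 1 = k+1 := by omega
  rw [e]
  calc 2*(k+1)^(k+2) = (k+1)^(k+2) + (k+1)*(k+1)^(k+1) := by ring
    _ ≤ (k+1)^(k+2) + (k+2)*(k+1)^(k+1) := by
        apply Nat.add_le_add_left
        exact Nat.mul_le_mul_right _ (by omega)
    _ ≤ (k+1+1)^(k+1+1) := by
        calc (k+1)^(k+2) + (k+2)*(k+1)^(k+1) = (k+1)^(k+1+1) + (k+1+1)*(k+1)^(k+1) := by ring_nf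
          _ ≤ (k+1+1)^(k+1+1) := by
              have := binom_aux (k+1) (k+1) 1
              simpa [mul_one] using this

lemma two_mul_le_pow : ∀ (k : ℕ), 1 ≤ k → 2*k ≤ 2^k := by
  intro k
  induction k with
  | zero => omega
  | succ j IH =>
    intro _
    by_cases hj : 1 ≤ j
    · have h1 := IH hj
      have h2 : (2:ℕ) ≤ 2^j := by
        calc (2:ℕ) = 2^1 := by norm_num
          _ ≤ 2^j := Nat.pow_le_pow_right (by norm_num) hj
      calc 2*(j+1) = 2*j + 2 := by ring
        _ ≤ 2^j + 2^j := Nat.add_le_add h1 h2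
        _ = 2^(j+1) := by ring
    · have : j = 0 := by omega
      subst this; norm_num

lemma dup_comp {m : ℕ} (f' : (Fin m → ZMod 2) → ZMod 2) (ε : ZMod 2) :
    (fun p => dupF f' (Fin.cons ε p)) = f' := by
  funext p; simp [dupF, Fin.tail_cons]

lemma glue_comp0 {m : ℕ} (x y : (Fin m → ZMod 2) → ZMod 2) :
    (fun p => glueF x y (Fin.cons (0:ZMod 2) p)) = x := by
  funext p; simp [glueF, Fin.cons_zero, Fin.tail_cons]

lemma glue_comp1 {m : ℕ} (x y : (Fin m → ZMod 2) → ZMod 2) :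
    (fun p => glueF x y (Fin.cons (1:ZMod 2) p)) = y := by
  have h10 : ((1:ZMod 2) = 0) = False := by decide
  funext p; simp [glueF, Fin.cons_zero, Fin.tail_cons, h10]

lemma glue_self {m : ℕ} (x : (Fin m → ZMod 2) → ZMod 2) : glueF x x = dupF x := by
  funext p
  simp [glueF, dupF, ite_self]

lemma dup_split_step {m : ℕ}
    (IH : ∀ (a b : ℕ) (f g : (Fin m → ZMod 2) → ZMod 2), 1 ≤ a → 1 ≤ b →
      f ∈ maskSet m a → g ∈ maskSet m b → f ≠ g → 2 ^ m ≤ 2 ^ (max a b - 1) * Dcard f g)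
    {a b a' i : ℕ} {f' x y : (Fin m → ZMod 2) → ZMod 2}
    (ha'1 : 1 ≤ a') (ha'2 : a' ≤ a) (hi1 : 1 ≤ i) (hi2 : i < b)
    (hf' : f' ∈ maskSet m a') (hx : x ∈ maskSet m i) (hy : y ∈ maskSet m (b - i))
    (hne : dupF f' ≠ glueF x y) :
    2 ^ (m+1) ≤ 2 ^ (max a b - 1) * Dcard (dupF f') (glueF x y) := by
  have hD : Dcard (dupF f') (glueF x y) = Dcard f' x + Dcard f' y := by
    rw [Dcard_split, dup_comp, dup_comp, glue_comp0, glue_comp1]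
  have hbm : b ≤ max a b := le_max_right a b
  have ham : a ≤ max a b := le_max_left a b
  have hpow : (2:ℕ) * 2^(b-2) = 2^(b-1) := by
    rw [← pow_succ']
    congr 1
    omega
  by_cases hfx : f' = x
  · have hfy : f' ≠ y := by
      intro h
      apply hne
      rw [hfx] at h ⊢
      rw [← h, glue_self, h]
    have h1 := IH i (b-i) f' y hi1 (by omega) (by rw [hfx]; exact hx) hy hfy
    have hmax : max i (b-i) - 1 ≤ b - 2 := by
      have h2 : max i (b-i) ≤ b - 1 := max_le (by omega) (by omega)
      omega
    calc (2:ℕ)^(m+1) = 2 * 2^m := by ring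
      _ ≤ 2 * (2 ^ (max i (b-i) - 1) * Dcard f' y) := Nat.mul_le_mul_left _ h1
      _ ≤ 2 * (2 ^ (b-2) * Dcard f' y) :=
          Nat.mul_le_mul_left _ (Nat.mul_le_mul_right _ (Nat.pow_le_pow_right (by norm_num) hmax))
      _ = 2 ^ (b-1) * Dcard f' y := by rw [← mul_assoc, hpow]
      _ ≤ 2 ^ (max a b - 1) * (Dcard f' x + Dcard f' y) := by
          apply Nat.mul_le_mul
          · exact Nat.pow_le_pow_right (by norm_num) (by omega)
          · omega
      _ = _ := by rw [hD]
  · by_cases hfy : f' = y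
    · have h1 := IH (b-i) i f' x (by omega) hi1 (by rw [hfy]; exact hy) hx hfx
      have hmax : max (b-i) i - 1 ≤ b - 2 := by
        have h2 : max (b-i) i ≤ b - 1 := max_le (by omega) (by omega)
        omega
      calc (2:ℕ)^(m+1) = 2 * 2^m := by ring
        _ ≤ 2 * (2 ^ (max (b-i) i - 1) * Dcard f' x) := Nat.mul_le_mul_left _ h1
        _ ≤ 2 * (2 ^ (b-2) * Dcard f' x) :=
            Nat.mul_le_mul_left _ (Nat.mul_le_mul_right _ (Nat.pow_le_pow_right (by norm_num) hmax))
        _ = 2 ^ (b-1) * Dcard f' x := by rw [← mul_assoc, hpow]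
        _ ≤ 2 ^ (max a b - 1) * (Dcard f' x + Dcard f' y) := by
            apply Nat.mul_le_mul
            · exact Nat.pow_le_pow_right (by norm_num) (by omega)
            · omega
        _ = _ := by rw [hD]
    · have h1 := IH a' i f' x ha'1 hi1 hf' hx hfx
      have h2 := IH a' (b-i) f' y ha'1 (by omega) hf' hy hfy
      have hmx1 : max a' i - 1 ≤ max a b - 1 :=
        Nat.sub_le_sub_right (max_le (by omega) (by omega)) 1
      have hmx2 : max a' (b-i) - 1 ≤ max a b - 1 :=
        Nat.sub_le_sub_right (max_le (by omega) (by omega)) 1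
      have h1' : 2^m ≤ 2 ^ (max a b - 1) * Dcard f' x :=
        h1.trans (Nat.mul_le_mul_right _ (Nat.pow_le_pow_right (by norm_num) hmx1))
      have h2' : 2^m ≤ 2 ^ (max a b - 1) * Dcard f' y :=
        h2.trans (Nat.mul_le_mul_right _ (Nat.pow_le_pow_right (by norm_num) hmx2))
      calc (2:ℕ)^(m+1) = 2^m + 2^m := by ring
        _ ≤ 2 ^ (max a b - 1) * Dcard f' x + 2 ^ (max a b - 1) * Dcard f' y :=
            Nat.add_le_add h1' h2'
        _ = 2 ^ (max a b - 1) * (Dcard f' x + Dcard f' y) := by ring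
        _ = _ := by rw [hD]

lemma dist_lb : ∀ (m a b : ℕ) (f g : (Fin m → ZMod 2) → ZMod 2), 1 ≤ a → 1 ≤ b →
    f ∈ maskSet m a → g ∈ maskSet m b → f ≠ g →
    2 ^ m ≤ 2 ^ (max a b - 1) * Dcard f g := by
  intro m
  induction m with
  | zero =>
    intro a b f g _ _ _ _ hfg
    have h1 : 1 ≤ Dcard f g := Dcard_pos hfg
    have h2 : 1 ≤ 2 ^ (max a b - 1) := Nat.one_le_two_pow
    simpa using Nat.mul_le_mul h2 h1
  | succ m IH =>
    intro a b f g ha hb hf hg hfg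
    by_cases hA : m + 1 ≤ Nat.clog 2 a
    · have hlt : 2 ^ m < a := (Nat.lt_clog_iff_pow_lt (by norm_num)).mp (by omega)
      have hp : (1:ℕ) ≤ 2^m := Nat.one_le_two_pow
      have h2 : 2 * (a-1) ≤ 2 ^ (a-1) := two_mul_le_pow _ (by omega)
      have h3 : (2:ℕ)^(m+1) ≤ 2^(max a b - 1) := by
        calc (2:ℕ)^(m+1) = 2 * 2^m := by ring
          _ ≤ 2 * (a-1) := by omega
          _ ≤ 2^(a-1) := h2
          _ ≤ 2^(max a b - 1) := Nat.pow_le_pow_right (by norm_num)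
              (Nat.sub_le_sub_right (le_max_left a b) 1)
      exact h3.trans (Nat.le_mul_of_pos_right _ (Dcard_pos hfg))
    · by_cases hB : m + 1 ≤ Nat.clog 2 b
      · have hlt : 2 ^ m < b := (Nat.lt_clog_iff_pow_lt (by norm_num)).mp (by omega)
        have hp : (1:ℕ) ≤ 2^m := Nat.one_le_two_pow
        have h2 : 2 * (b-1) ≤ 2 ^ (b-1) := two_mul_le_pow _ (by omega)
        have h3 : (2:ℕ)^(m+1) ≤ 2^(max a b - 1) := by
          calc (2:ℕ)^(m+1) = 2 * 2^m := by ring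
            _ ≤ 2 * (b-1) := by omega
            _ ≤ 2^(b-1) := h2
            _ ≤ 2^(max a b - 1) := Nat.pow_le_pow_right (by norm_num)
                (Nat.sub_le_sub_right (le_max_right a b) 1)
        exact h3.trans (Nat.le_mul_of_pos_right _ (Dcard_pos hfg))
      · have hA' : Nat.clog 2 a ≤ m := by omega
        have hB' : Nat.clog 2 b ≤ m := by omega
        rcases mask_inv ha hA' hf with ⟨a', f', ha'1, ha'2, hf', rfl⟩ |
          ⟨i, x, y, hi1, hi2, hx, hy, rfl⟩
        · rcases mask_inv hb hB' hg with ⟨b', g', hb'1, hb'2, hg', rfl⟩ |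
            ⟨j, x', y', hj1, hj2, hx', hy', rfl⟩
          · -- dup dup
            have hne' : f' ≠ g' := fun h => hfg (by rw [h])
            have h1 := IH a' b' f' g' ha'1 hb'1 hf' hg' hne'
            have hmx : max a' b' - 1 ≤ max a b - 1 :=
              Nat.sub_le_sub_right (max_le (by omega) (by omega)) 1
            have h1' : 2^m ≤ 2 ^ (max a b - 1) * Dcard f' g' :=
              h1.trans (Nat.mul_le_mul_right _ (Nat.pow_le_pow_right (by norm_num) hmx))
            have hD : Dcard (dupF f') (dupF g') = Dcard f' g' + Dcard f' g' := by
              rw [Dcard_split, dup_comp, dup_comp, dup_comp, dup_comp]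
            calc (2:ℕ)^(m+1) = 2^m + 2^m := by ring
              _ ≤ 2 ^ (max a b - 1) * Dcard f' g' + 2 ^ (max a b - 1) * Dcard f' g' :=
                  Nat.add_le_add h1' h1'
              _ = 2 ^ (max a b - 1) * (Dcard f' g' + Dcard f' g') := by ring
              _ = _ := by rw [hD]
          · exact dup_split_step IH ha'1 ha'2 hj1 hj2 hf' hx' hy' hfg
        · rcases mask_inv hb hB' hg with ⟨b', g', hb'1, hb'2, hg', rfl⟩ |
            ⟨j, x', y', hj1, hj2, hx', hy', rfl⟩
          · rw [Dcard_comm, max_comm]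
            exact dup_split_step IH hb'1 hb'2 hi1 hi2 hg' hx hy (Ne.symm hfg)
          · -- split split
            have hD : Dcard (glueF x y) (glueF x' y') = Dcard x x' + Dcard y y' := by
              rw [Dcard_split, glue_comp0, glue_comp0, glue_comp1, glue_comp1]
            have hor : x ≠ x' ∨ y ≠ y' := by
              by_contra hcon
              push_neg at hcon
              exact hfg (by rw [hcon.1, hcon.2])
            have ham : a ≤ max a b := le_max_left a b
            have hbm : b ≤ max a b := le_max_right a b
            have hpow : (2:ℕ) * 2^(max a b - 2) = 2^(max a b - 1) := by
              rw [← pow_succ']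
              congr 1
              omega
            rcases hor with hne | hne
            · have h1 := IH i j x x' hi1 hj1 hx hx' hne
              have hmx : max i j - 1 ≤ max a b - 2 := by
                have : max i j ≤ max a b - 1 := max_le (by omega) (by omega)
                omega
              calc (2:ℕ)^(m+1) = 2 * 2^m := by ring
                _ ≤ 2 * (2 ^ (max i j - 1) * Dcard x x') := Nat.mul_le_mul_left _ h1
                _ ≤ 2 * (2 ^ (max a b - 2) * Dcard x x') :=
                    Nat.mul_le_mul_left _ (Nat.mul_le_mul_right _
                      (Nat.pow_le_pow_right (by norm_num) hmx))
                _ = 2 ^ (max a b - 1) * Dcard x x' := by rw [← mul_assoc, hpow]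
                _ ≤ 2 ^ (max a b - 1) * (Dcard x x' + Dcard y y') :=
                    Nat.mul_le_mul_left _ (by omega)
                _ = _ := by rw [hD]
            · have h1 := IH (a-i) (b-j) y y' (by omega) (by omega) hy hy' hne
              have hmx : max (a-i) (b-j) - 1 ≤ max a b - 2 := by
                have : max (a-i) (b-j) ≤ max a b - 1 := max_le (by omega) (by omega)
                omega
              calc (2:ℕ)^(m+1) = 2 * 2^m := by ring
                _ ≤ 2 * (2 ^ (max (a-i) (b-j) - 1) * Dcard y y') := Nat.mul_le_mul_left _ h1
                _ ≤ 2 * (2 ^ (max a b - 2) * Dcard y y') :=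
                    Nat.mul_le_mul_left _ (Nat.mul_le_mul_right _
                      (Nat.pow_le_pow_right (by norm_num) hmx))
                _ = 2 ^ (max a b - 1) * Dcard y y' := by rw [← mul_assoc, hpow]
                _ ≤ 2 ^ (max a b - 1) * (Dcard x x' + Dcard y y') :=
                    Nat.mul_le_mul_left _ (by omega)
                _ = _ := by rw [hD]

lemma mask_cover : ∀ m, 1 ≤ m → ∀ s : ℕ,
    ∃ F : Finset ((Fin m → ZMod 2) → ZMod 2),
      maskSet m s ⊆ ↑F ∧ F.card ≤ 2 * (2*m)^(s-1) := by
  intro m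
  induction m with
  | zero => omega
  | succ m IH =>
    intro _ s
    by_cases h1 : s ≤ 1
    · refine ⟨{fun _ => 0, fun _ => 1}, ?_, ?_⟩
      · rw [maskSet_succ, if_pos h1]
        intro f hf
        rcases hf with rfl | hf
        · simp
        · rcases hf with rfl; simp
      · calc ({fun _ => 0, fun _ => 1} :
              Finset ((Fin (m+1) → ZMod 2) → ZMod 2)).card ≤ 2 := by
              apply (Finset.card_insert_le _ _).trans
              simp
          _ ≤ 2 * (2*(m+1))^(s-1) := Nat.le_mul_of_pos_right _ (by positivity)
    · by_cases h2 : m + 1 ≤ Nat.clog 2 s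
      · refine ⟨Finset.univ, by simp, ?_⟩
        have hcard : (Finset.univ : Finset ((Fin (m+1) → ZMod 2) → ZMod 2)).card
            = 2 ^ (2^(m+1)) := by
          rw [Finset.card_univ, Fintype.card_fun, Fintype.card_fun]
          simp [ZMod.card, Fintype.card_fin]
        rw [hcard]
        rcases Nat.eq_zero_or_pos m with rfl | hm1
        · -- m = 0 : 2^2 = 4 ≤ 2*2^(s-1), s ≥ 2
          have hs2 : 2 ≤ s := by omega
          have : (4:ℕ) ≤ 2 * 2^(s-1) := by
            have h21 : (2:ℕ) ≤ 2^(s-1) := by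
              calc (2:ℕ) = 2^1 := (pow_one 2).symm
                _ ≤ 2^(s-1) := Nat.pow_le_pow_right (by norm_num) (by omega)
            omega
          simpa using this
        · have hlt : 2 ^ m < s := (Nat.lt_clog_iff_pow_lt (by norm_num)).mp (by omega)
          calc (2:ℕ) ^ (2^(m+1)) = 4 ^ (2^m) := by
                rw [show (4:ℕ) = 2^2 by norm_num, ← pow_mul]
                congr 1
                rw [pow_succ]
                ring
            _ ≤ (2*(m+1)) ^ (2^m) := Nat.pow_le_pow_left (by omega) _
            _ ≤ (2*(m+1)) ^ (s-1) := Nat.pow_le_pow_right (by omega) (by omega)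
            _ ≤ 2 * (2*(m+1)) ^ (s-1) := Nat.le_mul_of_pos_left _ (by norm_num)
      · have hs2 : 2 ≤ s := by omega
        have hm1 : 1 ≤ m := by
          by_contra hm0
          have hm0' : m = 0 := by omega
          subst hm0'
          have : 0 < Nat.clog 2 s := by
            rw [Nat.lt_clog_iff_pow_lt (by norm_num)]
            omega
          omega
        choose G hGsub hGcard using IH hm1
        refine ⟨(G s).image dupF ∪ (Finset.Ico 1 s).biUnion
          (fun i => ((G i) ×ˢ (G (s-i))).image (fun xy => glueF xy.1 xy.2)), ?_, ?_⟩
        · rw [maskSet_succ, if_neg h1, if_neg h2]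
          rintro f (⟨f', hf', rfl⟩ | hf)
          · apply Finset.mem_coe.mpr
            apply Finset.mem_union_left
            exact Finset.mem_image.mpr ⟨f', hGsub s hf', rfl⟩
          · rw [Set.mem_iUnion₂] at hf
            obtain ⟨i, hi, x, hx, y, hy, rfl⟩ := hf
            apply Finset.mem_coe.mpr
            apply Finset.mem_union_right
            apply Finset.mem_biUnion.mpr
            exact ⟨i, hi, Finset.mem_image.mpr ⟨(x, y),
              Finset.mem_product.mpr ⟨hGsub i hx, hGsub (s-i) hy⟩, rfl⟩⟩
        · calc ((G s).image dupF ∪ (Finset.Ico 1 s).biUnion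
              (fun i => ((G i) ×ˢ (G (s-i))).image (fun xy => glueF xy.1 xy.2))).card
              ≤ ((G s).image dupF).card + ((Finset.Ico 1 s).biUnion
                (fun i => ((G i) ×ˢ (G (s-i))).image (fun xy => glueF xy.1 xy.2))).card :=
                Finset.card_union_le _ _
            _ ≤ (G s).card + ∑ i ∈ Finset.Ico 1 s,
                (((G i) ×ˢ (G (s-i))).image (fun xy => glueF xy.1 xy.2)).card :=
                Nat.add_le_add (Finset.card_image_le) (Finset.card_biUnion_le)
            _ ≤ 2*(2*m)^(s-1) + ∑ i ∈ Finset.Ico 1 s, 4 * (2*m)^(s-2) := by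
                apply Nat.add_le_add (hGcard s)
                apply Finset.sum_le_sum
                intro i hi
                rw [Finset.mem_Ico] at hi
                calc (((G i) ×ˢ (G (s-i))).image (fun xy => glueF xy.1 xy.2)).card
                    ≤ ((G i) ×ˢ (G (s-i))).card := Finset.card_image_le
                  _ = (G i).card * (G (s-i)).card := Finset.card_product _ _
                  _ ≤ (2*(2*m)^(i-1)) * (2*(2*m)^(s-i-1)) :=
                      Nat.mul_le_mul (hGcard i) (hGcard (s-i))
                  _ = 4 * (2*m)^(s-2) := by
                      rw [show (2*(2*m)^(i-1)) * (2*(2*m)^(s-i-1))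
                          = 4 * ((2*m)^(i-1) * (2*m)^(s-i-1)) by ring, ← pow_add]
                      congr 2
                      omega
            _ = 2*(2*m)^(s-1) + (s-1) * (4 * (2*m)^(s-2)) := by
                rw [Finset.sum_const, Nat.card_Ico, smul_eq_mul]
            _ ≤ 2 * (2*(m+1))^(s-1) := by
                obtain ⟨k, hk⟩ : ∃ k, s - 1 = k + 1 := ⟨s - 2, by omega⟩
                have hk2 : s - 2 = k := by omega
                rw [hk, hk2]
                have hb := binom_aux k (2*m) 2
                calc 2*(2*m)^(k+1) + (k+1) * (4 * (2*m)^k)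
                    = 2 * ((2*m)^(k+1) + (k+1)*2*(2*m)^k) := by
                      ring
                  _ ≤ 2 * (2*m+2)^(k+1) := Nat.mul_le_mul_left _ hb
                  _ = 2 * (2*(m+1))^(k+1) := by ring_nf


/-- Upper bound on the minimum label size:
`L_min(s,m) ≤ 2^(s+1) * ((s-1) * (1 + ⌈log₂ m⌉) - 1)`. -/
theorem Lmin_upper_explicit (s m : ℕ) (hs : 2 ≤ s) (hsm : s ≤ m) :
    Lmin s m ≤ 2 ^ (s + 1) * ((s - 1) * (1 + Nat.clog 2 m) - 1) := by

  classical
  set c := Nat.clog 2 m with hc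
  have hm2 : 2 ≤ m := le_trans hs hsm
  have hc1 : 1 ≤ c := by
    rw [hc]
    have h := (Nat.lt_clog_iff_pow_lt (b := 2) (by norm_num) (x := m) (y := 0)).mpr
      (by simpa using (by omega : 1 < m))
    omega
  have hmc : m ≤ 2^c := Nat.le_pow_clog (by norm_num) m
  have key : ∀ L : Finset (Fin m → ZMod 2), Distinguishes L (maskSet m s) →
      L.card ≤ 2 ^ (s + 1) * ((s - 1) * (1 + c) - 1) →
      Lmin s m ≤ 2 ^ (s + 1) * ((s - 1) * (1 + c) - 1) := by
    intro L h1 h2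
    exact le_trans (Nat.sInf_le ⟨L, rfl, h1⟩) h2
  have hcardV : (Finset.univ : Finset (Fin m → ZMod 2)).card = 2^m := by
    rw [Finset.card_univ, Fintype.card_fun]
    simp [ZMod.card]
  by_cases h4 : 4 ≤ (s - 1) * (1 + c)
  · -- counting argument
    obtain ⟨F, hFsub, hFcard⟩ := mask_cover m (by omega) s
    set u := (s - 1) * (1 + c) - 1 with hu
    set N := 2 ^ (s + 1) * u with hN
    have hq2 : (2:ℕ) ≤ 2^(s-1) := by
      calc (2:ℕ) = 2^1 := (pow_one 2).symm
        _ ≤ 2^(s-1) := Nat.pow_le_pow_right (by norm_num) (by omega)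
    have hsplit2m : (2:ℕ)^m = 2^(m-s+1) * 2^(s-1) := by
      rw [← pow_add]
      congr 1
      omega
    have hdist : ∀ f ∈ maskSet m s, ∀ g ∈ maskSet m s, f ≠ g →
        2^(m-s+1) ≤ Dcard f g := by
      intro f hf g hg hne
      have h := dist_lb m s s f g (by omega) (by omega) hf hg hne
      rw [max_self] at h
      rw [hsplit2m, mul_comm (2^(m-s+1) : ℕ) (2^(s-1) : ℕ)] at h
      exact Nat.le_of_mul_le_mul_left h (by positivity)
    have hagree : ∀ f ∈ maskSet m s, ∀ g ∈ maskSet m s, f ≠ g →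
        (Finset.univ.filter fun v => f v = g v).card ≤ 2^(m-s+1) * (2^(s-1) - 1) := by
      intro f hf g hg hne
      have h1 := hdist f hf g hg hne
      have h2 := Finset.card_filter_add_card_filter_not
        (s := (Finset.univ : Finset (Fin m → ZMod 2))) (p := fun v => f v = g v)
      have hDeq : (Finset.univ.filter fun v => ¬ f v = g v).card = Dcard f g := by
        unfold Dcard
        congr 1
      rw [hDeq, hcardV] at h2
      have hA : 2^(m-s+1) * (2^(s-1) - 1) = 2^m - 2^(m-s+1) := by
        rw [Nat.mul_sub, mul_one, ← hsplit2m]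
      rw [hA]
      omega
    have main : ∃ T : Fin N → (Fin m → ZMod 2), ∀ f ∈ maskSet m s, ∀ g ∈ maskSet m s,
        (∀ k, f (T k) = g (T k)) → f = g := by
      by_contra hcon
      push_neg at hcon
      set Pairs := (F ×ˢ F).filter
        (fun fg => fg.1 ≠ fg.2 ∧ fg.1 ∈ maskSet m s ∧ fg.2 ∈ maskSet m s) with hP
      have hsubuniv : (Finset.univ : Finset (Fin N → (Fin m → ZMod 2))) ⊆
          Pairs.biUnion (fun fg => Fintype.piFinset (fun _ : Fin N =>
            Finset.univ.filter (fun v => fg.1 v = fg.2 v))) := by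
        intro T _
        obtain ⟨f, hf, g, hg, hag, hne⟩ := hcon T
        apply Finset.mem_biUnion.mpr
        refine ⟨(f, g), ?_, ?_⟩
        · exact Finset.mem_filter.mpr
            ⟨Finset.mem_product.mpr ⟨hFsub hf, hFsub hg⟩, hne, hf, hg⟩
        · apply Fintype.mem_piFinset.mpr
          intro k
          simp [hag k]
      have hcount : ((Finset.univ : Finset (Fin N → (Fin m → ZMod 2)))).card ≤
          Pairs.card * (2^(m-s+1) * (2^(s-1) - 1))^N := by
        calc ((Finset.univ : Finset (Fin N → (Fin m → ZMod 2)))).card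
            ≤ (Pairs.biUnion (fun fg => Fintype.piFinset (fun _ : Fin N =>
              Finset.univ.filter (fun v => fg.1 v = fg.2 v)))).card :=
              Finset.card_le_card hsubuniv
          _ ≤ ∑ fg ∈ Pairs, (Fintype.piFinset (fun _ : Fin N =>
              Finset.univ.filter (fun v => fg.1 v = fg.2 v))).card :=
              Finset.card_biUnion_le
          _ ≤ ∑ _fg ∈ Pairs, (2^(m-s+1) * (2^(s-1) - 1))^N := by
              apply Finset.sum_le_sum
              intro fg hfg
              obtain ⟨_, hne, hf, hg⟩ := Finset.mem_filter.mp hfg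
              rw [Fintype.card_piFinset_const]
              exact Nat.pow_le_pow_left (hagree fg.1 hf fg.2 hg hne) N
          _ = Pairs.card * (2^(m-s+1) * (2^(s-1) - 1))^N := by
              rw [Finset.sum_const, smul_eq_mul]
      have hcarduniv : ((Finset.univ : Finset (Fin N → (Fin m → ZMod 2)))).card
          = (2^m)^N := by
        rw [Finset.card_univ, Fintype.card_fun, Fintype.card_fun]
        simp [ZMod.card]
      have hF2 : F.card ≤ 2^(1 + (s-1)*(1+c)) := by
        calc F.card ≤ 2*(2*m)^(s-1) := hFcard
          _ ≤ 2*(2^(1+c))^(s-1) := by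
              apply Nat.mul_le_mul_left
              apply Nat.pow_le_pow_left
              rw [pow_add, pow_one]
              omega
          _ = 2^(1 + (s-1)*(1+c)) := by
              rw [← pow_mul, pow_add, pow_one, mul_comm (1+c) (s-1)]
      have hPairs : Pairs.card < 2^(4*u) := by
        have h1 : Pairs.card ≤ F.card * F.card :=
          le_trans (Finset.card_filter_le _ _) (le_of_eq (Finset.card_product _ _))
        have h2 : F.card * F.card ≤ 2^(1 + (s-1)*(1+c)) * 2^(1 + (s-1)*(1+c)) :=
          Nat.mul_le_mul hF2 hF2
        have h3 : (2:ℕ)^(1 + (s-1)*(1+c)) * 2^(1 + (s-1)*(1+c))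
            = 2^(2 + 2*((s-1)*(1+c))) := by
          rw [← pow_add]
          congr 1
          ring
        have h4' : (2:ℕ)^(2 + 2*((s-1)*(1+c))) < 2^(4*u) := by
          apply Nat.pow_lt_pow_right (by norm_num)
          rw [hu]
          omega
        omega
      have hstrict : Pairs.card * (2^(m-s+1) * (2^(s-1) - 1))^N < (2^m)^N := by
        have hNq : N = 2^(s-1) * (4*u) := by
          rw [hN]
          rw [show s + 1 = (s-1) + 2 by omega, pow_add]
          ring
        have e1 : ((2:ℕ)^(s-1) - 1)^N = (((2:ℕ)^(s-1) - 1)^(2^(s-1)))^(4*u) := by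
          rw [hNq, pow_mul]
        have e2 : ((2:ℕ)^(s-1))^N = (((2:ℕ)^(s-1))^(2^(s-1)))^(4*u) := by
          rw [hNq, pow_mul]
        have stepA : (2:ℕ)^(4*u) * (2^(s-1) - 1)^N ≤ (2^(s-1))^N := by
          calc (2:ℕ)^(4*u) * (2^(s-1) - 1)^N
              = 2^(4*u) * ((2^(s-1) - 1)^(2^(s-1)))^(4*u) := by rw [e1]
            _ = (2 * (2^(s-1) - 1)^(2^(s-1)))^(4*u) := by rw [mul_pow]
            _ ≤ ((2^(s-1))^(2^(s-1)))^(4*u) :=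
                Nat.pow_le_pow_left (q_pow_ge hq2) _
            _ = (2^(s-1))^N := e2.symm
        have hQpos : 0 < ((2:ℕ)^(s-1) - 1)^N := by
          apply pow_pos
          omega
        have hYpos : 0 < ((2:ℕ)^(m-s+1))^N := pow_pos (by positivity) N
        calc Pairs.card * (2^(m-s+1) * (2^(s-1) - 1))^N
            = (Pairs.card * (2^(s-1) - 1)^N) * (2^(m-s+1))^N := by
              rw [mul_pow]
              ring
          _ < (2^(4*u) * (2^(s-1) - 1)^N) * (2^(m-s+1))^N := by
              apply mul_lt_mul_of_pos_right _ hYpos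
              exact mul_lt_mul_of_pos_right hPairs hQpos
          _ ≤ (2^(s-1))^N * (2^(m-s+1))^N := Nat.mul_le_mul_right _ stepA
          _ = (2^m)^N := by
              rw [← mul_pow, ← pow_add]
              congr 2
              omega
      rw [hcarduniv] at hcount
      omega
    obtain ⟨T, hT⟩ := main
    apply key (Finset.univ.image T)
    · intro x hx y hy hag
      apply hT x hx y hy
      intro k
      exact hag (T k) (Finset.mem_image.mpr ⟨k, Finset.mem_univ k, rfl⟩)
    · calc (Finset.univ.image T).card ≤ (Finset.univ : Finset (Fin N)).card :=
          Finset.card_image_le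
        _ = N := by rw [Finset.card_univ, Fintype.card_fin]
        _ = 2 ^ (s + 1) * ((s - 1) * (1 + c) - 1) := by rw [hN, hu]
  · -- trivial case: s = 2, m ≤ 4
    have hs2 : s = 2 := by
      by_contra hs3
      have h3 : 3 ≤ s := by omega
      have := Nat.mul_le_mul (show 2 ≤ s - 1 by omega) (show 2 ≤ 1 + c by omega)
      omega
    subst hs2
    apply key Finset.univ
    · intro x _ y _ h
      funext p
      exact h p (Finset.mem_univ p)
    · rw [hcardV]
      have hcc : c = 1 ∨ c = 2 := by omega
      have hgoal : (2:ℕ) ^ (2 + 1) * ((2 - 1) * (1 + c) - 1) = 8 * c := by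
        norm_num
      rw [hgoal]
      rcases hcc with h | h <;> rw [h] at hmc ⊢ <;> norm_num at hmc ⊢
      · calc (2:ℕ)^m ≤ 2^2 := Nat.pow_le_pow_right (by norm_num) hmc
          _ ≤ 8 := by norm_num
      · calc (2:ℕ)^m ≤ 2^4 := Nat.pow_le_pow_right (by norm_num) hmc
          _ ≤ 16 := by norm_num
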